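/- A finite simple graph G is a cocomparability graph if and only if there exists a partial order ⊑ on the set C(G) of maximal cliques of G such that every two maximal cliques have a least upper bound A ∨ B and a greatest lower bound A ∧ B with respect to ⊑ (i.e., (C(G), ⊑) is a lattice), and the following two conditions hold: (i) for all maximal cliques A, B, C with A ⊑ B ⊑ C, A ∩ C ⊆ B; (ii) for all maximal cliques A, B, A ∪ B ⊆ (A ∨ B) ∪ (A ∧ B). -/

import Mathlib

/-- `G` is a cocomparability graph: there is a partial order on the vertices such
that two distinct vertices are adjacent iff they are incomparable (equivalently,
the complement of `G` has a transitive orientation). -/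
def IsCocomparabilityGraph {V : Type*} (G : SimpleGraph V) : Prop :=
  ∃ le : V → V → Prop, IsPartialOrder V le ∧
    ∀ u v : V, u ≠ v → (G.Adj u v ↔ ¬ le u v ∧ ¬ le v u)

/-- A maximal clique of `G`: a clique not properly contained in any other clique. -/
def MaxCliq {V : Type*} (G : SimpleGraph V) (A : Set V) : Prop :=
  G.IsClique A ∧ ∀ B : Set V, G.IsClique B → A ⊆ B → A = B

namespace Stmt11Aux

variable {V : Type*} {G : SimpleGraph V}

lemma maxcliq_adj {A : Set V} (hA : MaxCliq G A) {u v : V} (hu : u ∈ A) (hv : v ∈ A)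
    (hne : u ≠ v) : G.Adj u v :=
  ((SimpleGraph.isClique_iff (G := G)).mp hA.1) hu hv hne

/-! ### Forward direction machinery -/

section Forward

variable (le : V → V → Prop)

def upS (A : Set V) : Set V := {x | ∃ a ∈ A, le a x}

def Jn (A B : Set V) : Set V :=
  {x | x ∈ upS le A ∩ upS le B ∧ ∀ z ∈ upS le A ∩ upS le B, le z x → z = x}

def Rr (A B : Set V) : Prop :=
  (∀ a ∈ A, ∃ b ∈ B, le a b) ∧ (∀ b ∈ B, ∃ a ∈ A, le a b)

variable {le}
variable (hrefl : ∀ a, le a a) (htrans : ∀ a b c, le a b → le b c → le a c)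
  (hanti : ∀ a b, le a b → le b a → a = b)
  (hadj : ∀ u v : V, u ≠ v → (G.Adj u v ↔ ¬ le u v ∧ ¬ le v u))

section WF
variable [Fintype V]

include hrefl htrans hanti in
lemma descend (S : Set V) {y : V} (hy : y ∈ S) :
    ∃ m ∈ S, le m y ∧ ∀ z ∈ S, le z m → z = m := by
  classical
  have hlt : WellFounded (fun a b => le a b ∧ a ≠ b) := by
    haveI : IsTrans V (fun a b => le a b ∧ a ≠ b) :=
      ⟨fun a b c h1 h2 => ⟨htrans _ _ _ h1.1 h2.1, fun he => h1.2 (hanti _ _ h1.1 (he ▸ h2.1))⟩⟩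
    haveI : IsIrrefl V (fun a b => le a b ∧ a ≠ b) := ⟨fun a h => h.2 rfl⟩
    exact Finite.wellFounded_of_trans_of_irrefl _
  induction y using hlt.induction with
  | _ y IH =>
    by_cases h : ∃ z ∈ S, le z y ∧ z ≠ y
    · obtain ⟨z, hzS, hzy, hne⟩ := h
      obtain ⟨m, hmS, hml, hmin⟩ := IH z ⟨hzy, hne⟩ hzS
      exact ⟨m, hmS, htrans _ _ _ hml hzy, hmin⟩
    · push_neg at h
      exact ⟨y, hy, hrefl y, fun z hz hzy => h z hz hzy⟩

end WF

include hadj in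
lemma incomp {A : Set V} (hA : MaxCliq G A) {u v : V} (hu : u ∈ A) (hv : v ∈ A)
    (h : le u v) : u = v := by
  by_contra hne
  exact ((hadj u v hne).mp (maxcliq_adj hA hu hv hne)).1 h

include hadj in
lemma comp {A : Set V} (hA : MaxCliq G A) {x : V} (hx : x ∉ A) :
    ∃ a ∈ A, le x a ∨ le a x := by
  by_contra h
  push_neg at h
  have hcl : G.IsClique (insert x A) := by
    refine hA.1.insert fun b hb hbx => ?_
    exact (hadj x b hbx).mpr ⟨(h b hb).1, (h b hb).2⟩
  have := hA.2 (insert x A) hcl (Set.subset_insert _ _)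
  exact hx (this ▸ Set.mem_insert x A)

include htrans hanti hadj in
lemma mem_Jn_left {A B : Set V} (hA : MaxCliq G A) {x : V} (hxA : x ∈ A)
    (hxU : x ∈ upS le A ∩ upS le B) : x ∈ Jn le A B := by
  refine ⟨hxU, fun z hz hzx => ?_⟩
  obtain ⟨a, haA, haz⟩ := hz.1
  have : a = x := incomp hadj hA haA hxA (htrans _ _ _ haz hzx)
  exact hanti _ _ hzx (this ▸ haz)

include htrans hanti hadj in
lemma mem_Jn_right {A B : Set V} (hB : MaxCliq G B) {x : V} (hxB : x ∈ B)
    (hxU : x ∈ upS le A ∩ upS le B) : x ∈ Jn le A B := by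
  refine ⟨hxU, fun z hz hzx => ?_⟩
  obtain ⟨b, hbB, hbz⟩ := hz.2
  have : b = x := incomp hadj hB hbB hxB (htrans _ _ _ hbz hzx)
  exact hanti _ _ hzx (this ▸ hbz)

lemma Jn_comm (le : V → V → Prop) (A B : Set V) : Jn le A B = Jn le B A := by
  unfold Jn
  rw [Set.inter_comm]

include hrefl htrans hanti hadj in
lemma jn_above {A B : Set V} (hA : MaxCliq G A) (hB : MaxCliq G B) {a : V} (haA : a ∈ A) :
    ∃ j ∈ Jn le A B, le a j := by
  by_cases h : a ∈ upS le B
  · exact ⟨a, mem_Jn_left htrans hanti hadj hA haA ⟨⟨a, haA, hrefl a⟩, h⟩, hrefl a⟩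
  · have haB : a ∉ B := fun haB => h ⟨a, haB, hrefl a⟩
    obtain ⟨b, hbB, hab⟩ := comp hadj hB haB
    have hab : le a b := hab.resolve_right fun hba => h ⟨b, hbB, hba⟩
    exact ⟨b, mem_Jn_right htrans hanti hadj hB hbB ⟨⟨a, haA, hab⟩, ⟨b, hbB, hrefl b⟩⟩, hab⟩

include hrefl htrans hanti hadj in
lemma compJnAux [Fintype V] {A B : Set V} (hA : MaxCliq G A) (hB : MaxCliq G B) {x : V}
    (hxA : x ∉ upS le A) : ∃ j ∈ Jn le A B, x ≠ j ∧ le x j := by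
  have hxA' : x ∉ A := fun h => hxA ⟨x, h, hrefl x⟩
  obtain ⟨a, haA, hxa⟩ := comp hadj hA hxA'
  have hxa : le x a := hxa.resolve_right fun h => hxA ⟨a, haA, h⟩
  by_cases h : a ∈ upS le B
  · refine ⟨a, mem_Jn_left htrans hanti hadj hA haA ⟨⟨a, haA, hrefl a⟩, h⟩, ?_, hxa⟩
    intro he; subst he; exact hxA ⟨x, haA, hrefl x⟩
  · have haB : a ∉ B := fun hh => h ⟨a, hh, hrefl a⟩
    obtain ⟨b, hbB, hab⟩ := comp hadj hB haB
    have hab : le a b := hab.resolve_right fun hh => h ⟨b, hbB, hh⟩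
    refine ⟨b, mem_Jn_right htrans hanti hadj hB hbB ⟨⟨a, haA, hab⟩, ⟨b, hbB, hrefl b⟩⟩,
      ?_, htrans _ _ _ hxa hab⟩
    intro he; subst he; exact hxA ⟨a, haA, hab⟩

include hrefl htrans hanti hadj in
lemma compJn [Fintype V] {A B : Set V} (hA : MaxCliq G A) (hB : MaxCliq G B) {x : V}
    (hx : x ∉ Jn le A B) : ∃ j ∈ Jn le A B, x ≠ j ∧ (le x j ∨ le j x) := by
  by_cases hxU : x ∈ upS le A ∩ upS le B
  · obtain ⟨m, hmU, hmx, hmin⟩ := descend hrefl htrans hanti (upS le A ∩ upS le B) hxU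
    refine ⟨m, ⟨hmU, hmin⟩, fun he => hx (he ▸ ⟨hmU, hmin⟩), Or.inr hmx⟩
  · rw [Set.mem_inter_iff, not_and_or] at hxU
    rcases hxU with hxA | hxB
    · obtain ⟨j, hj, hne, hle⟩ := compJnAux hrefl htrans hanti hadj hA hB hxA
      exact ⟨j, hj, hne, Or.inl hle⟩
    · obtain ⟨j, hj, hne, hle⟩ := compJnAux hrefl htrans hanti hadj hB hA hxB
      exact ⟨j, (Jn_comm le B A) ▸ hj, hne, Or.inl hle⟩

include hrefl htrans hanti hadj in
lemma maxcliq_Jn [Fintype V] {A B : Set V} (hA : MaxCliq G A) (hB : MaxCliq G B) :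
    MaxCliq G (Jn le A B) := by
  constructor
  · rw [SimpleGraph.isClique_iff]
    intro u hu v hv hne
    refine (hadj u v hne).mpr ⟨fun h => hne (hv.2 u hu.1 h), fun h => hne ((hu.2 v hv.1 h).symm)⟩
  · intro T hT hsub
    refine Set.Subset.antisymm hsub fun x hxT => ?_
    by_contra hx
    obtain ⟨j, hj, hne, hcmp⟩ := compJn hrefl htrans hanti hadj hA hB hx
    have hadj' := (SimpleGraph.isClique_iff (G := G)).mp hT hxT (hsub hj) hne
    rcases hcmp with h | h
    · exact ((hadj x j hne).mp hadj').1 h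
    · exact ((hadj x j hne).mp hadj').2 h

include hrefl htrans hanti hadj in
lemma rr_left_Jn {A B : Set V} (hA : MaxCliq G A) (hB : MaxCliq G B) :
    Rr le A (Jn le A B) :=
  ⟨fun a ha => jn_above hrefl htrans hanti hadj hA hB ha, fun j hj => hj.1.1⟩

include hrefl htrans hanti hadj in
lemma rr_right_Jn {A B : Set V} (hA : MaxCliq G A) (hB : MaxCliq G B) :
    Rr le B (Jn le A B) :=
  ⟨fun b hb => by
      obtain ⟨j, hj, hle⟩ := jn_above hrefl htrans hanti hadj hB hA hb
      exact ⟨j, (Jn_comm le B A) ▸ hj, hle⟩,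
    fun j hj => hj.1.2⟩

include hrefl htrans hanti hadj in
lemma rr_lub [Fintype V] {A B C : Set V} (hA : MaxCliq G A) (hB : MaxCliq G B)
    (hC : MaxCliq G C) (hAC : Rr le A C) (hBC : Rr le B C) : Rr le (Jn le A B) C := by
  have hCU : ∀ c ∈ C, c ∈ upS le A ∩ upS le B := fun c hc => ⟨hAC.2 c hc, hBC.2 c hc⟩
  constructor
  · intro j hj
    by_cases hjC : j ∈ C
    · exact ⟨j, hjC, hrefl j⟩
    · obtain ⟨c, hcC, hcmp⟩ := comp hadj hC hjC
      rcases hcmp with h | h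
      · exact ⟨c, hcC, h⟩
      · exact absurd ((hj.2 c (hCU c hcC) h) ▸ hcC) hjC
  · intro c hc
    obtain ⟨m, hmU, hmc, hmin⟩ := descend hrefl htrans hanti (upS le A ∩ upS le B) (hCU c hc)
    exact ⟨m, ⟨hmU, hmin⟩, hmc⟩

include hrefl in
lemma rr_refl (A : Set V) : Rr le A A :=
  ⟨fun a ha => ⟨a, ha, hrefl a⟩, fun a ha => ⟨a, ha, hrefl a⟩⟩

include htrans hanti hadj in
lemma rr_antisymm_sub {A B : Set V} (hA : MaxCliq G A) (h1 : Rr le A B) (h2 : Rr le B A) :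
    A ⊆ B := by
  intro a ha
  obtain ⟨b, hbB, hab⟩ := h1.1 a ha
  obtain ⟨a', ha'A, hba'⟩ := h2.1 b hbB
  have he : a = a' := incomp hadj hA ha ha'A (htrans _ _ _ hab hba')
  have : a = b := hanti _ _ hab (he ▸ hba')
  exact this ▸ hbB

include htrans hanti hadj in
lemma rr_antisymm {A B : Set V} (hA : MaxCliq G A) (hB : MaxCliq G B) (h1 : Rr le A B)
    (h2 : Rr le B A) : A = B :=
  Set.Subset.antisymm (rr_antisymm_sub htrans hanti hadj hA h1 h2)
    (rr_antisymm_sub htrans hanti hadj hB h2 h1)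

include htrans in
lemma rr_trans {A B C : Set V} (h1 : Rr le A B) (h2 : Rr le B C) : Rr le A C := by
  constructor
  · intro a ha
    obtain ⟨b, hb, hab⟩ := h1.1 a ha
    obtain ⟨c, hc, hbc⟩ := h2.1 b hb
    exact ⟨c, hc, htrans _ _ _ hab hbc⟩
  · intro c hc
    obtain ⟨b, hb, hbc⟩ := h2.2 c hc
    obtain ⟨a, ha, hab⟩ := h1.2 b hb
    exact ⟨a, ha, htrans _ _ _ hab hbc⟩

include htrans hanti hadj in
lemma rr_between {A B C : Set V} (hB : MaxCliq G B) (h1 : Rr le A B) (h2 : Rr le B C) :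
    A ∩ C ⊆ B := by
  rintro x ⟨hxA, hxC⟩
  obtain ⟨b, hbB, hxb⟩ := h1.1 x hxA
  obtain ⟨b', hb'B, hb'x⟩ := h2.2 x hxC
  have he : b' = b := incomp hadj hB hb'B hbB (htrans _ _ _ hb'x hxb)
  have : x = b := hanti _ _ hxb (he ▸ hb'x)
  exact this ▸ hbB

lemma hadj_flip (hadj : ∀ u v : V, u ≠ v → (G.Adj u v ↔ ¬ le u v ∧ ¬ le v u)) :
    ∀ u v : V, u ≠ v → (G.Adj u v ↔ ¬ flip le u v ∧ ¬ flip le v u) :=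
  fun u v hne => (hadj u v hne).trans and_comm

lemma Rr_flip {A B : Set V} : Rr (flip le) A B ↔ Rr le B A :=
  ⟨fun h => ⟨h.2, h.1⟩, fun h => ⟨h.2, h.1⟩⟩

include hrefl htrans hanti hadj in
lemma union_sub {A B : Set V} (hA : MaxCliq G A) (hB : MaxCliq G B) :
    A ∪ B ⊆ Jn le A B ∪ Jn (flip le) A B := by
  have htransF : ∀ a b c : V, flip le a b → flip le b c → flip le a c :=
    fun a b c h1 h2 => htrans c b a h2 h1
  have hantiF : ∀ a b : V, flip le a b → flip le b a → a = b :=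
    fun a b h1 h2 => (hanti b a h1 h2).symm
  have hadjF := hadj_flip hadj
  rintro x (hx | hx)
  · by_cases h : x ∈ upS le B
    · exact Or.inl (mem_Jn_left htrans hanti hadj hA hx ⟨⟨x, hx, hrefl x⟩, h⟩)
    · have hxB : x ∉ B := fun hh => h ⟨x, hh, hrefl x⟩
      obtain ⟨b, hbB, hxb⟩ := comp hadj hB hxB
      have hxb : le x b := hxb.resolve_right fun hh => h ⟨b, hbB, hh⟩
      exact Or.inr (mem_Jn_left htransF hantiF hadjF hA hx ⟨⟨x, hx, hrefl x⟩, ⟨b, hbB, hxb⟩⟩)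
  · by_cases h : x ∈ upS le A
    · exact Or.inl (mem_Jn_right htrans hanti hadj hB hx ⟨h, ⟨x, hx, hrefl x⟩⟩)
    · have hxA : x ∉ A := fun hh => h ⟨x, hh, hrefl x⟩
      obtain ⟨a, haA, hxa⟩ := comp hadj hA hxA
      have hxa : le x a := hxa.resolve_right fun hh => h ⟨a, haA, hh⟩
      exact Or.inr (mem_Jn_right htransF hantiF hadjF hB hx ⟨⟨a, haA, hxa⟩, ⟨x, hx, hrefl x⟩⟩)

end Forward



/-! ### Backward direction machinery -/

section Backward

variable [Fintype V] (r : Set V → Set V → Prop) (jn mt : Set V → Set V → Set V)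

lemma exists_maxcliq_supset' {s : Set V} (hs : G.IsClique s) :
    ∃ A, MaxCliq G A ∧ s ⊆ A := by
  classical
  obtain ⟨A, hA, hmax⟩ := Set.Finite.exists_maximalFor (id : Set V → Set V)
    {t | G.IsClique t ∧ s ⊆ t} (Set.toFinite _) ⟨s, hs, subset_rfl⟩
  exact ⟨A, ⟨hA.1, fun B hB hAB => Set.Subset.antisymm hAB (hmax (j := B) ⟨hB, hA.2.trans hAB⟩ hAB)⟩, hA.2⟩

lemma exists_mem_maxcliq (u : V) : ∃ A, MaxCliq G A ∧ u ∈ A := by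
  obtain ⟨A, hA, hsub⟩ := exists_maxcliq_supset' (s := {u}) (by simp)
  exact ⟨A, hA, hsub rfl⟩

omit [Fintype V] in
variable (G) in
def Rel (u v : V) : Prop :=
  ∃ C D : Set V, MaxCliq G C ∧ MaxCliq G D ∧ u ∈ C ∧ v ∈ D ∧ r C D

variable
  (h3 : ∀ A B C, MaxCliq G A → MaxCliq G B → MaxCliq G C → r A B → r B C → r A C)
  (h4 : ∀ A B, MaxCliq G A → MaxCliq G B →
        MaxCliq G (jn A B) ∧ r A (jn A B) ∧ r B (jn A B) ∧
        (∀ C, MaxCliq G C → r A C → r B C → r (jn A B) C))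
  (h5 : ∀ A B, MaxCliq G A → MaxCliq G B →
        MaxCliq G (mt A B) ∧ r (mt A B) A ∧ r (mt A B) B ∧
        (∀ C, MaxCliq G C → r C A → r C B → r C (mt A B)))
  (h6 : ∀ A B C, MaxCliq G A → MaxCliq G B → MaxCliq G C → r A B → r B C → A ∩ C ⊆ B)
  (h7 : ∀ A B, MaxCliq G A → MaxCliq G B → A ∪ B ⊆ jn A B ∪ mt A B)

include h4 h5 h6 h7 in
lemma rel_asymm {u v : V} (hne : u ≠ v) (hnadj : ¬ G.Adj u v)
    (h : Rel G r u v) (h' : Rel G r v u) : False := by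
  obtain ⟨C, D, hC, hD, huC, hvD, hCD⟩ := h
  obtain ⟨C', D', hC', hD', hvC', huD', hC'D'⟩ := h'
  obtain ⟨hs, hsC, hsC', -⟩ := h5 C C' hC hC'
  obtain ⟨ht, -, -, -⟩ := h4 C C' hC hC'
  have hsub := h7 C C' hC hC'
  rcases hsub (Or.inr hvC') with hvt | hvs
  · rcases hsub (Or.inl huC) with hut | hus
    · exact hnadj (maxcliq_adj ht hut hvt hne)
    · have huC' : u ∈ C' := h6 (mt C C') C' D' hs hC' hD' hsC' hC'D' ⟨hus, huD'⟩
      exact hnadj (maxcliq_adj hC' huC' hvC' hne)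
  · have hvC : v ∈ C := h6 (mt C C') C D hs hC hD hsC hCD ⟨hvs, hvD⟩
    exact hnadj (maxcliq_adj hC huC hvC hne)

include h3 h4 h5 h7 in
lemma rel_total {u v : V} (hne : u ≠ v) (hnadj : ¬ G.Adj u v) :
    Rel G r u v ∨ Rel G r v u := by
  obtain ⟨A, hA, huA⟩ := exists_mem_maxcliq (G := G) u
  obtain ⟨B, hB, hvB⟩ := exists_mem_maxcliq (G := G) v
  obtain ⟨hJ, hAJ, hBJ, -⟩ := h4 A B hA hB
  obtain ⟨hM, hMA, hMB, -⟩ := h5 A B hA hB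
  have hMJ : r (mt A B) (jn A B) := h3 _ A _ hM hA hJ hMA hAJ
  have hsub := h7 A B hA hB
  rcases hsub (Or.inl huA) with huJ | huM
  · rcases hsub (Or.inr hvB) with hvJ | hvM
    · exact absurd (maxcliq_adj hJ huJ hvJ hne) hnadj
    · exact Or.inr ⟨mt A B, jn A B, hM, hJ, hvM, huJ, hMJ⟩
  · rcases hsub (Or.inr hvB) with hvJ | hvM
    · exact Or.inl ⟨mt A B, jn A B, hM, hJ, huM, hvJ, hMJ⟩
    · exact absurd (maxcliq_adj hM huM hvM hne) hnadj

include h3 h4 h5 h6 h7 in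
lemma rel_trans {u v w : V} (huv : u ≠ v) (hvw : v ≠ w) (h1 : ¬ G.Adj u v)
    (h2 : ¬ G.Adj v w) (hR1 : Rel G r u v) (hR2 : Rel G r v w) :
    u ≠ w ∧ ¬ G.Adj u w ∧ Rel G r u w := by
  have hneuw : u ≠ w := by
    rintro rfl
    exact rel_asymm r jn mt h4 h5 h6 h7 huv h1 hR1 hR2
  obtain ⟨C, D, hC, hD, huC, hvD, hCD⟩ := hR1
  obtain ⟨C', D', hC', hD', hvC', hwD', hC'D'⟩ := hR2
  constructor
  · exact hneuw
  constructor
  · intro hadjuw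
    have hpair : G.IsClique {u, w} := by
      rw [SimpleGraph.isClique_iff, Set.pairwise_pair]
      exact fun _ => ⟨hadjuw, hadjuw.symm⟩
    obtain ⟨E, hE, hsubE⟩ := exists_maxcliq_supset' hpair
    have huE : u ∈ E := hsubE (by simp)
    have hwE : w ∈ E := hsubE (by simp)
    obtain ⟨hJ5, hEJ5, -, -⟩ := h4 E D hE hD
    obtain ⟨hM5, hM5E, -, -⟩ := h5 E D hE hD
    rcases h7 E D hE hD (Or.inr hvD) with hvJ5 | hvM5
    · exact rel_asymm r jn mt h4 h5 h6 h7 hvw h2 ⟨C', D', hC', hD', hvC', hwD', hC'D'⟩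
        ⟨E, jn E D, hE, hJ5, hwE, hvJ5, hEJ5⟩
    · exact rel_asymm r jn mt h4 h5 h6 h7 huv h1
        ⟨C, D, hC, hD, huC, hvD, hCD⟩ ⟨mt E D, E, hM5, hE, hvM5, huE, hM5E⟩
  · obtain ⟨hJ4, hDJ4, hD'J4, -⟩ := h4 D D' hD hD'
    obtain ⟨hM4, hM4D, -, -⟩ := h5 D D' hD hD'
    rcases h7 D D' hD hD' (Or.inr hwD') with hwJ4 | hwM4
    · exact ⟨C, jn D D', hC, hJ4, huC, hwJ4, h3 C D _ hC hD hJ4 hCD hDJ4⟩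
    · exact absurd ⟨mt D D', D, hM4, hD, hwM4, hvD, hM4D⟩
        (fun h => rel_asymm r jn mt h4 h5 h6 h7 hvw h2 ⟨C', D', hC', hD', hvC', hwD', hC'D'⟩ h)

end Backward

end Stmt11Aux

open Stmt11Aux in
/-- A finite graph is a cocomparability graph iff its maximal cliques carry a
lattice structure satisfying the consecutiveness condition (i) and the
union condition (ii). -/
theorem stmt11 {V : Type*} [Fintype V] (G : SimpleGraph V) :
    IsCocomparabilityGraph G ↔
    ∃ (r : Set V → Set V → Prop) (jn mt : Set V → Set V → Set V),
      (∀ A, MaxCliq G A → r A A) ∧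
      (∀ A B, MaxCliq G A → MaxCliq G B → r A B → r B A → A = B) ∧
      (∀ A B C, MaxCliq G A → MaxCliq G B → MaxCliq G C → r A B → r B C → r A C) ∧
      (∀ A B, MaxCliq G A → MaxCliq G B →
        MaxCliq G (jn A B) ∧ r A (jn A B) ∧ r B (jn A B) ∧
        (∀ C, MaxCliq G C → r A C → r B C → r (jn A B) C)) ∧
      (∀ A B, MaxCliq G A → MaxCliq G B →
        MaxCliq G (mt A B) ∧ r (mt A B) A ∧ r (mt A B) B ∧
        (∀ C, MaxCliq G C → r C A → r C B → r C (mt A B))) ∧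
      (∀ A B C, MaxCliq G A → MaxCliq G B → MaxCliq G C → r A B → r B C → A ∩ C ⊆ B) ∧
      (∀ A B, MaxCliq G A → MaxCliq G B → A ∪ B ⊆ jn A B ∪ mt A B) := by
  constructor
  · rintro ⟨le, hpo, hadj⟩
    have hrefl : ∀ a, le a a := hpo.refl
    have htrans : ∀ a b c, le a b → le b c → le a c := fun a b c => hpo.trans a b c
    have hanti : ∀ a b : V, le a b → le b a → a = b := fun a b => hpo.antisymm a b
    have htransF : ∀ a b c : V, flip le a b → flip le b c → flip le a c :=
      fun a b c h1 h2 => htrans c b a h2 h1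
    have hantiF : ∀ a b : V, flip le a b → flip le b a → a = b :=
      fun a b h1 h2 => (hanti b a h1 h2).symm
    have hreflF : ∀ a, flip le a a := hrefl
    have hadjF := hadj_flip hadj
    refine ⟨Rr le, Jn le, fun A B => Jn (flip le) A B, ?_, ?_, ?_, ?_, ?_, ?_, ?_⟩
    · exact fun A _ => rr_refl hrefl A
    · exact fun A B hA hB h1 h2 => rr_antisymm htrans hanti hadj hA hB h1 h2
    · exact fun A B C _ _ _ h1 h2 => rr_trans htrans h1 h2
    · intro A B hA hB
      exact ⟨maxcliq_Jn hrefl htrans hanti hadj hA hB,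
        rr_left_Jn hrefl htrans hanti hadj hA hB,
        rr_right_Jn hrefl htrans hanti hadj hA hB,
        fun C hC hAC hBC => rr_lub hrefl htrans hanti hadj hA hB hC hAC hBC⟩
    · intro A B hA hB
      exact ⟨maxcliq_Jn hreflF htransF hantiF hadjF hA hB,
        Rr_flip.mp (rr_left_Jn hreflF htransF hantiF hadjF hA hB),
        Rr_flip.mp (rr_right_Jn hreflF htransF hantiF hadjF hA hB),
        fun C hC hCA hCB => Rr_flip.mp
          (rr_lub hreflF htransF hantiF hadjF hA hB hC (Rr_flip.mpr hCA) (Rr_flip.mpr hCB))⟩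
    · exact fun A B C _ hB _ h1 h2 => rr_between htrans hanti hadj hB h1 h2
    · exact fun A B hA hB => union_sub hrefl htrans hanti hadj hA hB
  · rintro ⟨r, jn, mt, h1, h2, h3, h4, h5, h6, h7⟩
    classical
    have hasym : ∀ {u v : V}, u ≠ v → ¬G.Adj u v → Rel G r u v → Rel G r v u → False :=
      fun {u v} hne hnadj ha hb => rel_asymm r jn mt h4 h5 h6 h7 hne hnadj ha hb
    refine ⟨fun u v => u = v ∨ (¬ G.Adj u v ∧ Rel G r u v), ?_, ?_⟩
    · refine { refl := fun a => Or.inl rfl, trans := ?_, antisymm := ?_ }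
      · rintro a b c (rfl | ⟨hn1, hR1⟩) hx
        · exact hx
        rcases hx with rfl | ⟨hn2, hR2⟩
        · exact Or.inr ⟨hn1, hR1⟩
        by_cases hab : a = b
        · exact Or.inr ⟨hab ▸ hn2, hab ▸ hR2⟩
        by_cases hbc : b = c
        · exact Or.inr ⟨hbc ▸ hn1, hbc ▸ hR1⟩
        obtain ⟨hne, hnadj, hR⟩ := rel_trans r jn mt h3 h4 h5 h6 h7 hab hbc hn1 hn2 hR1 hR2
        exact Or.inr ⟨hnadj, hR⟩
      · rintro a b (rfl | ⟨hn1, hR1⟩) hx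
        · rfl
        rcases hx with rfl | ⟨hn2, hR2⟩
        · rfl
        by_cases hab : a = b
        · exact hab
        · exact (hasym hab hn1 hR1 hR2).elim
    · intro u v hne
      constructor
      · intro hadj
        constructor
        · rintro (rfl | ⟨hn, -⟩)
          exacts [hne rfl, hn hadj]
        · rintro (rfl | ⟨hn, -⟩)
          exacts [hne rfl, hn hadj.symm]
      · rintro ⟨hl1, hl2⟩
        by_contra hnadj
        rcases rel_total r jn mt h3 h4 h5 h7 hne hnadj with h | h
        · exact hl1 (Or.inr ⟨hnadj, h⟩)
        · exact hl2 (Or.inr ⟨fun a => hnadj a.symm, h⟩)
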